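/- Let x and y be unit vectors in a Minkowski plane. Then any point on the line through the origin and y that is nearest to x in the antinorm lies in the unit ball of the norm. -/

import Mathlib

/-- The antinorm associated with a norm and a symplectic form `ω`:
`anorm ω x = sup {ω x y : ‖y‖ = 1}`. -/
noncomputable def anorm {V : Type*} [NormedAddCommGroup V] [NormedSpace ℝ V]
    (ω : V →ₗ[ℝ] V →ₗ[ℝ] ℝ) (x : V) : ℝ :=
  sSup {r : ℝ | ∃ y : V, ‖y‖ = 1 ∧ r = ω x y}

/-- Birkhoff normality: `x ⊣ y` iff `‖x‖ ≤ ‖x + t • y‖` for all `t`. -/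
def BNormal {V : Type*} [NormedAddCommGroup V] [NormedSpace ℝ V] (x y : V) : Prop :=
  ∀ t : ℝ, ‖x‖ ≤ ‖x + t • y‖

section helpers

variable {V : Type*} [NormedAddCommGroup V] [NormedSpace ℝ V]

lemma anorm_bddAbove [FiniteDimensional ℝ V] (ω : V →ₗ[ℝ] V →ₗ[ℝ] ℝ) (v : V) :
    BddAbove {r : ℝ | ∃ y : V, ‖y‖ = 1 ∧ r = ω v y} := by
  refine ⟨‖LinearMap.toContinuousLinearMap (ω v)‖, ?_⟩
  rintro r ⟨w, hw, rfl⟩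
  calc (ω v) w ≤ |(ω v) w| := le_abs_self _
    _ = ‖LinearMap.toContinuousLinearMap (ω v) w‖ := rfl
    _ ≤ ‖LinearMap.toContinuousLinearMap (ω v)‖ * ‖w‖ :=
        (LinearMap.toContinuousLinearMap (ω v)).le_opNorm w
    _ = _ := by rw [hw, mul_one]

lemma le_anorm [FiniteDimensional ℝ V] (ω : V →ₗ[ℝ] V →ₗ[ℝ] ℝ) (v w : V) (hw : ‖w‖ = 1) :
    ω v w ≤ anorm ω v :=
  le_csSup (anorm_bddAbove ω v) ⟨w, hw, rfl⟩

lemma abs_le_anorm [FiniteDimensional ℝ V] (ω : V →ₗ[ℝ] V →ₗ[ℝ] ℝ) (v w : V) (hw : ‖w‖ = 1) :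
    |ω v w| ≤ anorm ω v := by
  rcases abs_cases (ω v w) with ⟨h, _⟩ | ⟨h, _⟩
  · rw [h]; exact le_anorm ω v w hw
  · rw [h]
    have := le_anorm ω v (-w) (by simpa using hw)
    simpa using this

lemma anorm_le (ω : V →ₗ[ℝ] V →ₗ[ℝ] ℝ) (v : V) {C : ℝ} (hC0 : 0 ≤ C)
    (h : ∀ w : V, ‖w‖ = 1 → ω v w ≤ C) : anorm ω v ≤ C :=
  Real.sSup_le (by rintro r ⟨w, hw, rfl⟩; exact h w hw) hC0

end helpers

/-- Any point on the line `{t • y}` nearest (in the antinorm) to a unit vector `x` lies in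
the unit ball of the norm. -/
theorem stmt18 {V : Type*} [NormedAddCommGroup V] [NormedSpace ℝ V]
    (hdim : Module.finrank ℝ V = 2)
    (ω : V →ₗ[ℝ] V →ₗ[ℝ] ℝ)
    (halt : ∀ x : V, ω x x = 0)
    (hnd : ∀ a : V, (∀ y : V, ω a y = 0) → a = 0)
    (x y : V) (hx : ‖x‖ = 1) (hy : ‖y‖ = 1)
    (m : V) (hm : ∃ lam : ℝ, m = lam • y)
    (hnear : ∀ lam : ℝ, anorm ω (m - x) ≤ anorm ω (lam • y - x)) :
    ‖m‖ ≤ 1 := by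
  haveI : FiniteDimensional ℝ V := FiniteDimensional.of_finrank_pos (by omega)
  have skew : ∀ a b : V, ω a b = -ω b a := by
    intro a b
    have h := halt (a + b)
    simp only [map_add, LinearMap.add_apply, halt] at h
    linarith
  obtain ⟨lam, rfl⟩ := hm
  have hy0 : y ≠ 0 := by intro h; rw [h, norm_zero] at hy; norm_num at hy
  have hx0 : x ≠ 0 := by intro h; rw [h, norm_zero] at hx; norm_num at hx
  rw [norm_smul, hy, mul_one, Real.norm_eq_abs]
  by_cases hxy : ω x y = 0
  · -- degenerate case: x and y are parallel
    have hnli : ¬ LinearIndependent ℝ ![x, y] := by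
      intro hli
      have hcard : Fintype.card (Fin 2) = Module.finrank ℝ V := by simp [hdim]
      let b := basisOfLinearIndependentOfCardEqFinrank hli hcard
      have hb : ⇑b = ![x, y] := coe_basisOfLinearIndependentOfCardEqFinrank hli hcard
      have hωx : ω x = 0 := by
        apply b.ext
        intro i
        fin_cases i <;> simp [hb, halt, hxy]
      exact hx0 (hnd x (fun w => by rw [hωx]; rfl))
    rw [LinearIndependent.pair_iff] at hnli
    push_neg at hnli
    obtain ⟨s, t, hst, hst0⟩ := hnli
    have hs : s ≠ 0 := by
      intro h
      rw [h, zero_smul, zero_add] at hst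
      rcases smul_eq_zero.mp hst with h' | h'
      · exact hst0 h h'
      · exact hy0 h'
    have hxc : x = (-(t / s)) • y := by
      have h := congrArg (fun v : V => s⁻¹ • v) hst
      simp only [smul_add, smul_smul, inv_mul_cancel₀ hs, one_smul, smul_zero] at h
      have : x = -(s⁻¹ * t) • y := by
        rw [neg_smul]
        linear_combination (norm := module) h
      rw [this]; ring_nf
    set c : ℝ := -(t / s) with hc
    -- nearest point condition at lam = c gives anorm (lam • y - x) ≤ 0
    have hzero : anorm ω (c • y - x) ≤ 0 := by
      have : c • y - x = 0 := by rw [hxc]; abel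
      rw [this]
      exact anorm_le ω 0 le_rfl (fun w hw => by simp)
    -- find a unit vector u with ω y u ≠ 0
    have : ¬ (∀ w : V, ω y w = 0) := fun h => hy0 (hnd y h)
    push_neg at this
    obtain ⟨w, hw⟩ := this
    have hw0 : w ≠ 0 := by intro h; rw [h, map_zero] at hw; exact hw rfl
    set u : V := ‖w‖⁻¹ • w with hu
    have hu1 : ‖u‖ = 1 := by
      rw [hu, norm_smul, norm_inv, norm_norm, inv_mul_cancel₀ (norm_ne_zero_iff.mpr hw0)]
    have hyu : ω y u ≠ 0 := by
      rw [hu, map_smul]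
      simp only [smul_eq_mul]
      exact mul_ne_zero (inv_ne_zero (norm_ne_zero_iff.mpr hw0)) hw
    have hval : ω (lam • y - x) u = (lam - c) * ω y u := by
      rw [hxc]
      simp only [map_sub, map_smul, LinearMap.sub_apply, LinearMap.smul_apply, smul_eq_mul]
      ring
    have hle : |(lam - c) * ω y u| ≤ anorm ω (lam • y - x) := by
      rw [← hval]; exact abs_le_anorm ω _ u hu1
    have hchain := hle.trans ((hnear c).trans hzero)
    have hlamc : lam = c := by
      have := abs_nonneg ((lam - c) * ω y u)
      have h0 : |(lam - c) * ω y u| = 0 := le_antisymm hchain this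
      rw [abs_eq_zero, mul_eq_zero] at h0
      rcases h0 with h' | h'
      · linarith [sub_eq_zero.mp h']
      · exact absurd h' hyu
    have : |c| = 1 := by
      have := hx
      rw [hxc, norm_smul, hy, mul_one, Real.norm_eq_abs] at this
      exact this
    rw [hlamc, this]
  · -- main case: ω x y ≠ 0, so x, y are linearly independent
    have hli : LinearIndependent ℝ ![x, y] := by
      rw [LinearIndependent.pair_iff]
      intro s t hst
      have h1 : ω (s • x + t • y) y = 0 := by rw [hst, map_zero]; rfl
      have h2 : ω x (s • x + t • y) = 0 := by rw [hst, map_zero]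
      simp only [map_add, map_smul, LinearMap.add_apply, LinearMap.smul_apply,
        smul_eq_mul, halt, mul_zero, add_zero, zero_add] at h1 h2
      constructor
      · rcases mul_eq_zero.mp h1 with h | h
        · exact h
        · exact absurd h hxy
      · rcases mul_eq_zero.mp h2 with h | h
        · exact h
        · exact absurd h hxy
    have hcard : Fintype.card (Fin 2) = Module.finrank ℝ V := by simp [hdim]
    let b := basisOfLinearIndependentOfCardEqFinrank hli hcard
    have hb : ⇑b = ![x, y] := coe_basisOfLinearIndependentOfCardEqFinrank hli hcard
    obtain ⟨g, hg1, hgy⟩ := exists_dual_vector ℝ y (norm_ne_zero_iff.mpr hy0)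
    set lam0 : ℝ := g x with hlam0
    have hgy1 : g y = 1 := by rw [hgy, hy]; norm_num
    -- key identity: ω (lam0 • y - x) = (-(ω x y)) • g
    have e0 : ω (lam0 • y - x) x = ((-(ω x y)) • (g : V →L[ℝ] ℝ).toLinearMap) x := by
      simp only [map_sub, map_smul, LinearMap.sub_apply, LinearMap.smul_apply, smul_eq_mul,
        ContinuousLinearMap.coe_coe, halt, sub_zero]
      rw [skew y x, ← hlam0]
      ring
    have e1 : ω (lam0 • y - x) y = ((-(ω x y)) • (g : V →L[ℝ] ℝ).toLinearMap) y := by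
      simp only [map_sub, map_smul, LinearMap.sub_apply, LinearMap.smul_apply, smul_eq_mul,
        ContinuousLinearMap.coe_coe, halt, hgy1]
      ring
    have key : ω (lam0 • y - x) = (-(ω x y)) • (g : V →L[ℝ] ℝ).toLinearMap := by
      apply b.ext
      intro i
      fin_cases i
      · simpa [hb] using e0
      · simpa [hb] using e1
    -- upper bound: anorm (lam0 • y - x) ≤ |ω x y|
    have hupper : anorm ω (lam0 • y - x) ≤ |ω x y| := by
      apply anorm_le ω _ (abs_nonneg _)
      intro w hw
      rw [key]
      simp only [LinearMap.smul_apply, ContinuousLinearMap.coe_coe, smul_eq_mul]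
      calc -(ω x y) * g w ≤ |(-(ω x y)) * g w| := le_abs_self _
        _ = |ω x y| * |g w| := by rw [abs_mul, abs_neg]
        _ ≤ |ω x y| * 1 := by
            apply mul_le_mul_of_nonneg_left _ (abs_nonneg _)
            calc |g w| = ‖g w‖ := rfl
              _ ≤ ‖g‖ * ‖w‖ := g.le_opNorm w
              _ = 1 := by rw [hg1, hw, one_mul]
        _ = |ω x y| := mul_one _
    -- lower bound: |lam| * |ω x y| ≤ anorm ω (lam • y - x)
    have hval : ω (lam • y - x) x = -(lam * ω x y) := by
      simp only [map_sub, map_smul, LinearMap.sub_apply, LinearMap.smul_apply, smul_eq_mul,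
        halt, sub_zero]
      rw [skew y x]; ring
    have hlower : |lam| * |ω x y| ≤ anorm ω (lam • y - x) := by
      have := abs_le_anorm ω (lam • y - x) x hx
      rw [hval, abs_neg, abs_mul] at this
      exact this
    have hfinal := hlower.trans ((hnear lam0).trans hupper)
    have hpos : 0 < |ω x y| := abs_pos.mpr hxy
    nlinarith
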